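/- arXiv:1706.02540 — 4 statements merged into one kernel-verified Lean document; each statement's English description precedes it below -/
import Mathlib

section
/- Let ι be a finite type, d ≥ 2, and let S_1,…,S_d be subsets of ι with generalized line graph L on vertex set {1,…,d}. For each k let M_k be a real square matrix indexed by ι that is supported on S_k. Fix s with 1 ≤ s ≤ d−1, let F = M_d·M_{d−1}⋯M_{s+2}·M_{s+1}·M_s⋯M_1 and let F' = M_d·M_{d−1}⋯M_{s+2}·M_s·M_{s+1}·M_{s−1}⋯M_1 (i.e., the same ordered product with the factors M_s and M_{s+1} interchanged). If either (i) S_s ∩ S_{s+1} = ∅, or (ii) S_s ∩ S_{s+1} ≠ ∅ but no cycle of L passes through vertex s or through vertex s+1, then the characteristic polynomial of F equals the characteristic polynomial of F'. -/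
open Polynomial

/-- A square real matrix `M` indexed by `ι` is *supported on* `S ⊆ ι` if
`M i j` equals the Kronecker delta `δ_{ij}` whenever `i` and `j` are not both in `S`. -/
def SupportedOn {ι : Type*} [DecidableEq ι] (M : Matrix ι ι ℝ) (S : Set ι) : Prop :=
  ∀ i j, ¬(i ∈ S ∧ j ∈ S) → M i j = if i = j then 1 else 0

/-- The generalized line graph of a family of sets. -/
def genLineGraph {ι : Type*} {d : ℕ} (S : Fin d → Set ι) : SimpleGraph (Fin d) where
  Adj k l := k ≠ l ∧ (S k ∩ S l).Nonempty
  symm := by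
    constructor
    intro k l h
    exact ⟨h.1.symm, by rw [Set.inter_comm]; exact h.2⟩
  loopless := by
    constructor
    intro k h
    exact h.1 rfl

/-! ### Auxiliary lemmas -/

lemma my_rev_inj {R : Type*} [CommRing R] {p q : R[X]}
    (hdeg : p.natDegree = q.natDegree) (h : p.reverse = q.reverse) : p = q := by
  ext i
  rcases le_or_gt i p.natDegree with hi | hi
  · have h1 : p.reverse.coeff (p.natDegree - i) = p.coeff i := by
      rw [Polynomial.coeff_reverse, Polynomial.revAt_le (Nat.sub_le _ _), Nat.sub_sub_self hi]
    have h2 : q.reverse.coeff (q.natDegree - i) = q.coeff i := by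
      rw [Polynomial.coeff_reverse, Polynomial.revAt_le (Nat.sub_le _ _),
        Nat.sub_sub_self (hdeg ▸ hi)]
    rw [← h1, ← h2, h, hdeg]
  · rw [Polynomial.coeff_eq_zero_of_natDegree_lt hi,
      Polynomial.coeff_eq_zero_of_natDegree_lt (hdeg ▸ hi)]

/-- The characteristic polynomial is invariant under cyclic permutation of a product. -/
lemma my_charpoly_mul_comm {ι : Type*} [Fintype ι] [DecidableEq ι]
    (A B : Matrix ι ι ℝ) : (A * B).charpoly = (B * A).charpoly := by
  apply my_rev_inj
  · rw [Matrix.charpoly_natDegree_eq_dim, Matrix.charpoly_natDegree_eq_dim]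
  · rw [Matrix.reverse_charpoly, Matrix.reverse_charpoly]
    unfold Matrix.charpolyRev
    rw [Matrix.map_mul, Matrix.map_mul, ← smul_mul_assoc,
      Matrix.det_one_sub_mul_comm, mul_smul_comm]

/-- Matrices supported on disjoint sets commute. -/
lemma supportedOn_commute {ι : Type*} [Fintype ι] [DecidableEq ι]
    {M N : Matrix ι ι ℝ} {S T : Set ι} (hM : SupportedOn M S) (hN : SupportedOn N T)
    (h : S ∩ T = ∅) : Commute M N := by
  have hST : ∀ x, x ∈ S → x ∉ T := fun x hx hx' => by
    rw [Set.eq_empty_iff_forall_notMem] at h; exact h x ⟨hx, hx'⟩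
  have hA : ∀ i j, ¬(i ∈ S ∧ j ∈ S) → (M - 1) i j = 0 := by
    intro i j hij
    simp [Matrix.sub_apply, hM i j hij, Matrix.one_apply]
  have hB : ∀ i j, ¬(i ∈ T ∧ j ∈ T) → (N - 1) i j = 0 := by
    intro i j hij
    simp [Matrix.sub_apply, hN i j hij, Matrix.one_apply]
  have hAB : (M - 1) * (N - 1) = 0 := by
    ext i j
    rw [Matrix.mul_apply, Matrix.zero_apply]
    apply Finset.sum_eq_zero
    intro k _
    by_cases hk : k ∈ S
    · rw [hB k j (fun hc => hST k hk hc.1), mul_zero]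
    · rw [hA i k (fun hc => hk hc.2), zero_mul]
  have hBA : (N - 1) * (M - 1) = 0 := by
    ext i j
    rw [Matrix.mul_apply, Matrix.zero_apply]
    apply Finset.sum_eq_zero
    intro k _
    by_cases hk : k ∈ T
    · rw [hA k j (fun hc => hST k hc.1 hk), mul_zero]
    · rw [hB i k (fun hc => hk hc.2), zero_mul]
  show M * N = N * M
  have e1 : M * N = (M - 1) * (N - 1) + M + N - 1 := by noncomm_ring
  have e2 : N * M = (N - 1) * (M - 1) + N + M - 1 := by noncomm_ring
  rw [e1, e2, hAB, hBA]
  abel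

/-- Sorting a product of elements whose classes pairwise commute into three blocks. -/
lemma prod_three_sorted {α : Type*} {G : Type*} [Monoid G] (f : α → G) (c : α → Fin 3) :
    ∀ l : List α, (∀ x ∈ l, ∀ y ∈ l, c x ≠ c y → Commute (f x) (f y)) →
    ∃ l0 l1 l2 : List α, (∀ x ∈ l0, c x = 0 ∧ x ∈ l) ∧ (∀ x ∈ l1, c x = 1 ∧ x ∈ l) ∧
      (∀ x ∈ l2, c x = 2 ∧ x ∈ l) ∧
      (l.map f).prod = (l0.map f).prod * (l1.map f).prod * (l2.map f).prod := by
  intro l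
  induction l with
  | nil => exact fun _ => ⟨[], [], [], by simp, by simp, by simp, by simp⟩
  | cons x l ih =>
    intro hcomm
    obtain ⟨l0, l1, l2, h0, h1, h2, hprod⟩ :=
      ih (fun u hu v hv huv =>
        hcomm u (List.mem_cons_of_mem _ hu) v (List.mem_cons_of_mem _ hv) huv)
    have hmemx : x ∈ x :: l := List.mem_cons_self
    have hx3 : c x = 0 ∨ c x = 1 ∨ c x = 2 := by
      have hlt := (c x).isLt
      have h' : (c x : ℕ) = 0 ∨ (c x : ℕ) = 1 ∨ (c x : ℕ) = 2 := by omega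
      rcases h' with h' | h' | h'
      · exact Or.inl (Fin.ext h')
      · exact Or.inr (Or.inl (Fin.ext h'))
      · exact Or.inr (Or.inr (Fin.ext h'))
    rcases hx3 with h | h | h
    · refine ⟨x :: l0, l1, l2, ?_, ?_, ?_, ?_⟩
      · intro y hy
        rcases List.mem_cons.1 hy with rfl | hy
        · exact ⟨h, hmemx⟩
        · exact ⟨(h0 y hy).1, List.mem_cons_of_mem _ (h0 y hy).2⟩
      · exact fun y hy => ⟨(h1 y hy).1, List.mem_cons_of_mem _ (h1 y hy).2⟩
      · exact fun y hy => ⟨(h2 y hy).1, List.mem_cons_of_mem _ (h2 y hy).2⟩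
      · simp only [List.map_cons, List.prod_cons, hprod, mul_assoc]
    · have hcom0 : Commute (f x) (l0.map f).prod := by
        apply Commute.list_prod_right
        intro y hy
        obtain ⟨z, hz, rfl⟩ := List.mem_map.1 hy
        exact hcomm x hmemx z (List.mem_cons_of_mem _ (h0 z hz).2)
          (by rw [h, (h0 z hz).1]; decide)
      refine ⟨l0, x :: l1, l2, ?_, ?_, ?_, ?_⟩
      · exact fun y hy => ⟨(h0 y hy).1, List.mem_cons_of_mem _ (h0 y hy).2⟩
      · intro y hy
        rcases List.mem_cons.1 hy with rfl | hy
        · exact ⟨h, hmemx⟩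
        · exact ⟨(h1 y hy).1, List.mem_cons_of_mem _ (h1 y hy).2⟩
      · exact fun y hy => ⟨(h2 y hy).1, List.mem_cons_of_mem _ (h2 y hy).2⟩
      · simp only [List.map_cons, List.prod_cons, hprod]
        rw [← mul_assoc (f x), ← mul_assoc (f x), hcom0.eq, mul_assoc _ (f x)]
    · have hcom0 : Commute (f x) (l0.map f).prod := by
        apply Commute.list_prod_right
        intro y hy
        obtain ⟨z, hz, rfl⟩ := List.mem_map.1 hy
        exact hcomm x hmemx z (List.mem_cons_of_mem _ (h0 z hz).2)
          (by rw [h, (h0 z hz).1]; decide)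
      have hcom1 : Commute (f x) (l1.map f).prod := by
        apply Commute.list_prod_right
        intro y hy
        obtain ⟨z, hz, rfl⟩ := List.mem_map.1 hy
        exact hcomm x hmemx z (List.mem_cons_of_mem _ (h1 z hz).2)
          (by rw [h, (h1 z hz).1]; decide)
      refine ⟨l0, l1, x :: l2, ?_, ?_, ?_, ?_⟩
      · exact fun y hy => ⟨(h0 y hy).1, List.mem_cons_of_mem _ (h0 y hy).2⟩
      · exact fun y hy => ⟨(h1 y hy).1, List.mem_cons_of_mem _ (h1 y hy).2⟩
      · intro y hy
        rcases List.mem_cons.1 hy with rfl | hy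
        · exact ⟨h, hmemx⟩
        · exact ⟨(h2 y hy).1, List.mem_cons_of_mem _ (h2 y hy).2⟩
      · simp only [List.map_cons, List.prod_cons, hprod]
        rw [← mul_assoc (f x), (hcom0.mul_right hcom1).eq, mul_assoc]

/-- The line graph with vertices `a` and `b` removed (as a graph on the same vertex set). -/
def offG {ι : Type*} {d : ℕ} (S : Fin d → Set ι) (a b : Fin d) : SimpleGraph (Fin d) where
  Adj k l := k ≠ l ∧ (S k ∩ S l).Nonempty ∧ k ≠ a ∧ k ≠ b ∧ l ≠ a ∧ l ≠ b
  symm := by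
    constructor
    rintro k l ⟨h1, h2, h3, h4, h5, h6⟩
    exact ⟨h1.symm, by rw [Set.inter_comm]; exact h2, h5, h6, h3, h4⟩
  loopless := ⟨fun k h => h.1 rfl⟩

lemma offG_adj_iff {ι : Type*} {d : ℕ} {S : Fin d → Set ι} {a b : Fin d} {k l : Fin d} :
    (offG S a b).Adj k l ↔ k ≠ l ∧ (S k ∩ S l).Nonempty ∧ k ≠ a ∧ k ≠ b ∧ l ≠ a ∧ l ≠ b :=
  Iff.rfl

lemma offG_le {ι : Type*} {d : ℕ} (S : Fin d → Set ι) (a b : Fin d) :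
    offG S a b ≤ genLineGraph S := by
  intro k l h
  exact ⟨(offG_adj_iff.1 h).1, (offG_adj_iff.1 h).2.1⟩

lemma offG_support {ι : Type*} {d : ℕ} {S : Fin d → Set ι} {a b : Fin d} {u v : Fin d}
    (w : (offG S a b).Walk u v) (hu : u ≠ a ∧ u ≠ b) : ∀ x ∈ w.support, x ≠ a ∧ x ≠ b := by
  induction w with
  | nil => simpa using hu
  | @cons u v' w' h p ih =>
    intro x hx
    rw [SimpleGraph.Walk.support_cons] at hx
    rcases List.mem_cons.1 hx with rfl | hx
    · exact hu
    · exact ih ⟨(offG_adj_iff.1 h).2.2.2.2.1, (offG_adj_iff.1 h).2.2.2.2.2⟩ x hx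

/-- Vertices on the `a` side of the pair `a, b`. -/
def Aside {ι : Type*} {d : ℕ} (S : Fin d → Set ι) (a b : Fin d) (k : Fin d) : Prop :=
  k ≠ a ∧ k ≠ b ∧ ∃ m, (offG S a b).Reachable k m ∧ (S m ∩ S a).Nonempty

/-- Vertices on the `b` side of the pair `a, b`. -/
def Bside {ι : Type*} {d : ℕ} (S : Fin d → Set ι) (a b : Fin d) (k : Fin d) : Prop :=
  k ≠ a ∧ k ≠ b ∧ ∃ m, (offG S a b).Reachable k m ∧ (S m ∩ S b).Nonempty

lemma not_aside_bside {ι : Type*} {d : ℕ} {S : Fin d → Set ι} {a b : Fin d}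
    (hne : a ≠ b) (hab : (S a ∩ S b).Nonempty)
    (hcyc : ∀ (v : Fin d) (w : (genLineGraph S).Walk v v), w.IsCycle →
      a ∉ w.support ∧ b ∉ w.support)
    {k : Fin d} (hA : Aside S a b k) (hB : Bside S a b k) : False := by
  obtain ⟨hka, hkb, m, hreach, hma⟩ := hA
  obtain ⟨-, -, m', hreach', hmb⟩ := hB
  obtain ⟨w1⟩ := hreach
  obtain ⟨w2⟩ := hreach'
  have hM : m ≠ a ∧ m ≠ b := offG_support w1 ⟨hka, hkb⟩ m (SimpleGraph.Walk.end_mem_support w1)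
  have hM' : m' ≠ a ∧ m' ≠ b :=
    offG_support w2 ⟨hka, hkb⟩ m' (SimpleGraph.Walk.end_mem_support w2)
  have adj_am : (genLineGraph S).Adj a m :=
    ⟨fun h => hM.1 h.symm, by rw [Set.inter_comm]; exact hma⟩
  have adj_m'b : (genLineGraph S).Adj m' b := ⟨hM'.2, hmb⟩
  have adj_ba : (genLineGraph S).Adj b a :=
    ⟨fun h => hne h.symm, by rw [Set.inter_comm]; exact hab⟩
  let w1' : (genLineGraph S).Walk k m := w1.mapLe (offG_le S a b)
  let w2' : (genLineGraph S).Walk k m' := w2.mapLe (offG_le S a b)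
  let W : (genLineGraph S).Walk a b :=
    SimpleGraph.Walk.cons adj_am
      ((w1'.reverse.append w2').append (SimpleGraph.Walk.cons adj_m'b SimpleGraph.Walk.nil))
  have hoff_edge : ∀ {u v : Fin d} (w : (offG S a b).Walk u v),
      s(a, b) ∉ (w.mapLe (offG_le S a b)).edges := by
    intro u v w hmem
    have h1 : (w.mapLe (offG_le S a b)).edges = w.edges := by
      unfold SimpleGraph.Walk.mapLe
      rw [SimpleGraph.Walk.edges_map]
      have hfun : Sym2.map ⇑(SimpleGraph.Hom.ofLE (offG_le S a b)) = id := by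
        have h0 : ⇑(SimpleGraph.Hom.ofLE (offG_le S a b)) = fun x => x := rfl
        rw [h0, Sym2.map_id']
      rw [hfun, List.map_id]
    rw [h1] at hmem
    have hadj := w.edges_subset_edgeSet hmem
    rw [SimpleGraph.mem_edgeSet] at hadj
    exact (offG_adj_iff.1 hadj).2.2.1 rfl
  have hWe : s(a, b) ∉ W.edges := by
    intro hmem
    unfold W at hmem
    rw [SimpleGraph.Walk.edges_cons, SimpleGraph.Walk.edges_append,
      SimpleGraph.Walk.edges_append] at hmem
    rcases List.mem_cons.1 hmem with heq | hmem
    · rw [Sym2.congr_right] at heq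
      exact hM.2 heq.symm
    rcases List.mem_append.1 hmem with hmem | hmem
    rcases List.mem_append.1 hmem with hmem | hmem
    · rw [SimpleGraph.Walk.edges_reverse, List.mem_reverse] at hmem
      exact hoff_edge w1 hmem
    · exact hoff_edge w2 hmem
    · rw [SimpleGraph.Walk.edges_cons] at hmem
      rcases List.mem_cons.1 hmem with heq | hmem
      · rw [Sym2.congr_left] at heq
        exact hM'.1 heq.symm
      · simp at hmem
  let p := W.toPath
  have hpe : s(b, a) ∉ (p : (genLineGraph S).Walk a b).edges := by
    rw [Sym2.eq_swap]
    exact fun h => hWe (W.edges_toPath_subset h)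
  have hcy : (SimpleGraph.Walk.cons adj_ba ↑p).IsCycle :=
    SimpleGraph.Path.cons_isCycle p adj_ba hpe
  have hnot := (hcyc b (SimpleGraph.Walk.cons adj_ba ↑p) hcy).1
  apply hnot
  rw [SimpleGraph.Walk.support_cons]
  exact List.mem_cons_of_mem _ (SimpleGraph.Walk.start_mem_support _)

lemma split_prod {G : Type*} [Monoid G] {d : ℕ} (a b : Fin d) (hab : (b : ℕ) = (a : ℕ) + 1)
    (g : Fin d → G) :
    (List.ofFn g).reverse.prod =
      (((List.finRange d).drop (↑a + 2)).reverse.map g).prod * (g b * g a) *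
      (((List.finRange d).take ↑a).reverse.map g).prod := by
  have hbd : (a : ℕ) + 1 < d := hab ▸ b.isLt
  have split : List.finRange d =
      (List.finRange d).take ↑a ++ a :: b :: (List.finRange d).drop (↑a + 2) := by
    conv_lhs => rw [← List.take_append_drop (↑a) (List.finRange d)]
    congr 1
    rw [List.drop_eq_getElem_cons (l := List.finRange d) (i := ↑a)
      (by simp only [List.length_finRange]; omega)]
    congr 1
    · apply Fin.ext; simp
    rw [List.drop_eq_getElem_cons (l := List.finRange d) (i := ↑a + 1)
      (by simp only [List.length_finRange]; omega)]
    congr 1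
    · apply Fin.ext; simp [hab]
  conv_lhs => rw [List.ofFn_eq_map, split]
  rw [List.map_append, List.reverse_append, List.prod_append, List.map_cons, List.map_cons,
    List.reverse_cons, List.reverse_cons, List.append_assoc, List.prod_append, List.prod_append]
  simp [mul_assoc]

lemma swap_head {G : Type*} [Monoid G] (x y z : G) (h : Commute x y) :
    x * (y * z) = y * (x * z) := by
  rw [← mul_assoc, h.eq, mul_assoc]

/-- Eigenvalue invariance under swapping two consecutive factors: indices are
`0`-based, so `a`, `b` with `b = a + 1` play the role of `s`, `s+1`. -/
theorem stmt2 {ι : Type*} [Fintype ι] [DecidableEq ι] {d : ℕ} (hd : 2 ≤ d)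
    (S : Fin d → Set ι) (M : Fin d → Matrix ι ι ℝ)
    (hM : ∀ k, SupportedOn (M k) (S k))
    (a b : Fin d) (hab : (b : ℕ) = (a : ℕ) + 1)
    (F F' : Matrix ι ι ℝ)
    (hF : F = (List.ofFn fun k => M k).reverse.prod)
    (hF' : F' = (List.ofFn fun k => M (Equiv.swap a b k)).reverse.prod)
    (hcond : S a ∩ S b = ∅ ∨
      ((S a ∩ S b).Nonempty ∧
        ∀ (v : Fin d) (w : (genLineGraph S).Walk v v), w.IsCycle →
          a ∉ w.support ∧ b ∉ w.support)) :
    F.charpoly = F'.charpoly := by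
  classical
  have hbd : (a : ℕ) + 1 < d := hab ▸ b.isLt
  have hne : a ≠ b := by
    intro h
    rw [h] at hab
    omega
  set lQ : List (Fin d) := (List.finRange d).take ↑a with hlQ
  set lP : List (Fin d) := (List.finRange d).drop (↑a + 2) with hlP
  -- membership bounds
  have hQmem : ∀ x ∈ lQ, (x : ℕ) < ↑a := by
    intro x hx
    obtain ⟨i, hi, hgx⟩ := List.mem_iff_getElem.1 hx
    have hi' : i < ↑a := by
      rw [hlQ, List.length_take, List.length_finRange] at hi
      omega
    subst hgx
    simp only [hlQ, List.getElem_take, List.getElem_finRange, Fin.coe_cast]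
    exact hi'
  have hPmem : ∀ x ∈ lP, (a : ℕ) + 1 < (x : ℕ) := by
    intro x hx
    obtain ⟨i, hi, hgx⟩ := List.mem_iff_getElem.1 hx
    subst hgx
    simp only [hlP, List.getElem_drop, List.getElem_finRange, Fin.coe_cast]
    omega
  have hQne : ∀ x ∈ lQ, x ≠ a ∧ x ≠ b := by
    intro x hx
    have := hQmem x hx
    constructor <;> (intro h; rw [h] at this; omega)
  have hPne : ∀ x ∈ lP, x ≠ a ∧ x ≠ b := by
    intro x hx
    have := hPmem x hx
    constructor <;> (intro h; rw [h] at this; omega)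
  -- decompose F and F'
  have hFsplit : F = (lP.reverse.map M).prod * (M b * M a) * (lQ.reverse.map M).prod := by
    rw [hF]; exact split_prod a b hab M
  have hF'split : F' = (lP.reverse.map M).prod * (M a * M b) * (lQ.reverse.map M).prod := by
    rw [hF', split_prod a b hab (fun k => M (Equiv.swap a b k))]
    have h1 : lP.reverse.map (fun k => M (Equiv.swap a b k)) = lP.reverse.map M := by
      apply List.map_congr_left
      intro x hx
      rw [List.mem_reverse] at hx
      rw [Equiv.swap_apply_of_ne_of_ne (hPne x hx).1 (hPne x hx).2]
    have h2 : lQ.reverse.map (fun k => M (Equiv.swap a b k)) = lQ.reverse.map M := by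
      apply List.map_congr_left
      intro x hx
      rw [List.mem_reverse] at hx
      rw [Equiv.swap_apply_of_ne_of_ne (hQne x hx).1 (hQne x hx).2]
    rw [h1, h2, Equiv.swap_apply_left, Equiv.swap_apply_right]
  set PP : Matrix ι ι ℝ := (lP.reverse.map M).prod with hPP
  set QQ : Matrix ι ι ℝ := (lQ.reverse.map M).prod with hQQ
  rcases hcond with hdisj | ⟨hnonempty, hcyc⟩
  · -- Case (i): M a and M b commute, so F = F'
    have hcomm : Commute (M a) (M b) := supportedOn_commute (hM a) (hM b) hdisj
    rw [hFsplit, hF'split, hcomm.eq]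
  · -- Case (ii)
    -- reduce to a statement about R * (M b * M a) and R * (M a * M b)
    have hFc : F.charpoly = ((QQ * PP) * (M b * M a)).charpoly := by
      rw [hFsplit, my_charpoly_mul_comm (PP * (M b * M a)) QQ, mul_assoc]
    have hF'c : F'.charpoly = ((QQ * PP) * (M a * M b)).charpoly := by
      rw [hF'split, my_charpoly_mul_comm (PP * (M a * M b)) QQ, mul_assoc]
    rw [hFc, hF'c]
    set lR : List (Fin d) := lQ.reverse ++ lP.reverse with hlR
    have hRmem : ∀ x ∈ lR, x ≠ a ∧ x ≠ b := by
      intro x hx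
      rcases List.mem_append.1 hx with hx | hx <;> rw [List.mem_reverse] at hx
      · exact hQne x hx
      · exact hPne x hx
    have hQP : QQ * PP = (lR.map M).prod := by
      rw [hlR, List.map_append, List.prod_append]
    -- labels
    set c : Fin d → Fin 3 := fun k =>
      if Aside S a b k then 0 else if Bside S a b k then 1 else 2 with hc
    have hcomm3 : ∀ x ∈ lR, ∀ y ∈ lR, c x ≠ c y → Commute (M x) (M y) := by
      intro x hx y hy hxy
      by_cases hxyeq : x = y
      · exact absurd (congrArg c hxyeq) hxy
      by_cases hS : (S x ∩ S y).Nonempty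
      · exfalso
        have hadj : (offG S a b).Adj x y :=
          offG_adj_iff.2
            ⟨hxyeq, hS, (hRmem x hx).1, (hRmem x hx).2, (hRmem y hy).1, (hRmem y hy).2⟩
        have hreach := hadj.reachable
        have hiffA : Aside S a b x ↔ Aside S a b y := by
          constructor
          · rintro ⟨-, -, m, hr, hm⟩
            exact ⟨(hRmem y hy).1, (hRmem y hy).2, m, hreach.symm.trans hr, hm⟩
          · rintro ⟨-, -, m, hr, hm⟩
            exact ⟨(hRmem x hx).1, (hRmem x hx).2, m, hreach.trans hr, hm⟩
        have hiffB : Bside S a b x ↔ Bside S a b y := by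
          constructor
          · rintro ⟨-, -, m, hr, hm⟩
            exact ⟨(hRmem y hy).1, (hRmem y hy).2, m, hreach.symm.trans hr, hm⟩
          · rintro ⟨-, -, m, hr, hm⟩
            exact ⟨(hRmem x hx).1, (hRmem x hx).2, m, hreach.trans hr, hm⟩
        apply hxy
        show (if Aside S a b x then (0:Fin 3) else if Bside S a b x then 1 else 2) =
          (if Aside S a b y then (0:Fin 3) else if Bside S a b y then 1 else 2)
        by_cases hA : Aside S a b x
        · simp only [if_pos hA, if_pos (hiffA.1 hA)]
        · simp only [if_neg hA, if_neg (fun h => hA (hiffA.2 h))]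
          by_cases hB : Bside S a b x
          · simp only [if_pos hB, if_pos (hiffB.1 hB)]
          · simp only [if_neg hB, if_neg (fun h => hB (hiffB.2 h))]
      · exact supportedOn_commute (hM x) (hM y) (Set.not_nonempty_iff_eq_empty.1 hS)
    obtain ⟨l0, l1, l2, h0, h1, h2, hRprod⟩ := prod_three_sorted M c lR hcomm3
    set P0 : Matrix ι ι ℝ := (l0.map M).prod with hP0def
    set P1 : Matrix ι ι ℝ := (l1.map M).prod with hP1def
    set P2 : Matrix ι ι ℝ := (l2.map M).prod with hP2def
    -- class membership facts
    have hAside : ∀ z ∈ l0, Aside S a b z := by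
      intro z hz
      have hcz : (if Aside S a b z then (0:Fin 3) else if Bside S a b z then 1 else 2) = 0 :=
        (h0 z hz).1
      by_contra hA
      rw [if_neg hA] at hcz
      by_cases hB : Bside S a b z
      · rw [if_pos hB] at hcz; exact absurd hcz (by decide)
      · rw [if_neg hB] at hcz; exact absurd hcz (by decide)
    have hBside : ∀ z ∈ l1, Bside S a b z := by
      intro z hz
      have hcz : (if Aside S a b z then (0:Fin 3) else if Bside S a b z then 1 else 2) = 1 :=
        (h1 z hz).1
      by_cases hA : Aside S a b z
      · rw [if_pos hA] at hcz; exact absurd hcz (by decide)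
      by_contra hB
      rw [if_neg hA, if_neg hB] at hcz
      exact absurd hcz (by decide)
    have hNeither : ∀ z ∈ l2, ¬Aside S a b z ∧ ¬Bside S a b z := by
      intro z hz
      have hcz : (if Aside S a b z then (0:Fin 3) else if Bside S a b z then 1 else 2) = 2 :=
        (h2 z hz).1
      constructor
      · intro hA; rw [if_pos hA] at hcz; exact absurd hcz (by decide)
      · intro hB
        by_cases hA : Aside S a b z
        · rw [if_pos hA] at hcz; exact absurd hcz (by decide)
        · rw [if_neg hA, if_pos hB] at hcz; exact absurd hcz (by decide)
    -- commutation of classes with `M a` and `M b`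
    have hb_of_not_bside : ∀ z : Fin d, z ≠ a → z ≠ b → ¬Bside S a b z →
        Commute (M z) (M b) := by
      intro z hza hzb hB
      apply supportedOn_commute (hM z) (hM b)
      by_contra hSne
      exact hB ⟨hza, hzb, z, SimpleGraph.Reachable.refl z,
        Set.nonempty_iff_ne_empty.2 hSne⟩
    have ha_of_not_aside : ∀ z : Fin d, z ≠ a → z ≠ b → ¬Aside S a b z →
        Commute (M z) (M a) := by
      intro z hza hzb hA
      apply supportedOn_commute (hM z) (hM a)
      by_contra hSne
      exact hA ⟨hza, hzb, z, SimpleGraph.Reachable.refl z,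
        Set.nonempty_iff_ne_empty.2 hSne⟩
    have hP0b : Commute P0 (M b) := by
      apply Commute.list_prod_left
      intro x hx
      obtain ⟨z, hz, rfl⟩ := List.mem_map.1 hx
      have hz' := hRmem z (h0 z hz).2
      exact hb_of_not_bside z hz'.1 hz'.2
        (fun hB => not_aside_bside hne hnonempty hcyc (hAside z hz) hB)
    have hP1a : Commute P1 (M a) := by
      apply Commute.list_prod_left
      intro x hx
      obtain ⟨z, hz, rfl⟩ := List.mem_map.1 hx
      have hz' := hRmem z (h1 z hz).2
      exact ha_of_not_aside z hz'.1 hz'.2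
        (fun hA => not_aside_bside hne hnonempty hcyc hA (hBside z hz))
    have hP2a : Commute P2 (M a) := by
      apply Commute.list_prod_left
      intro x hx
      obtain ⟨z, hz, rfl⟩ := List.mem_map.1 hx
      have hz' := hRmem z (h2 z hz).2
      exact ha_of_not_aside z hz'.1 hz'.2 (hNeither z hz).1
    have hP2b : Commute P2 (M b) := by
      apply Commute.list_prod_left
      intro x hx
      obtain ⟨z, hz, rfl⟩ := List.mem_map.1 hx
      have hz' := hRmem z (h2 z hz).2
      exact hb_of_not_bside z hz'.1 hz'.2 (hNeither z hz).2
    have hP0P1 : Commute P0 P1 := by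
      apply Commute.list_prod_left
      intro x hx
      obtain ⟨z, hz, rfl⟩ := List.mem_map.1 hx
      apply Commute.list_prod_right
      intro y hy
      obtain ⟨w, hw, rfl⟩ := List.mem_map.1 hy
      exact hcomm3 z (h0 z hz).2 w (h1 w hw).2 (by rw [(h0 z hz).1, (h1 w hw).1]; decide)
    have hP2P1 : Commute P2 P1 := by
      apply Commute.list_prod_left
      intro x hx
      obtain ⟨z, hz, rfl⟩ := List.mem_map.1 hx
      apply Commute.list_prod_right
      intro y hy
      obtain ⟨w, hw, rfl⟩ := List.mem_map.1 hy
      exact hcomm3 z (h2 z hz).2 w (h1 w hw).2 (by rw [(h2 z hz).1, (h1 w hw).1]; decide)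
    -- rearrange the two products
    rw [hQP, hRprod]
    have eL : P0 * P1 * P2 * (M b * M a) = (P1 * M b) * ((P0 * M a) * P2) := by
      simp only [mul_assoc]
      rw [swap_head P2 (M b) (M a) hP2b, hP2a.eq,
        swap_head P0 P1 (M b * (M a * P2)) hP0P1,
        swap_head P0 (M b) (M a * P2) hP0b]
    have eR : P0 * P1 * P2 * (M a * M b) = (P0 * M a) * ((P1 * M b) * P2) := by
      simp only [mul_assoc]
      rw [swap_head P2 (M a) (M b) hP2a, hP2b.eq,
        swap_head P1 (M a) (M b * P2) hP1a]
    rw [eL, eR, my_charpoly_mul_comm (P1 * M b) ((P0 * M a) * P2), mul_assoc,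
      (hP2P1.mul_right hP2b).eq]
end

section
/- Let n = r₁·r₂ with integers r₁, r₂ ≥ 2. Then there exists a finite sequence C_1, C_2, …, C_{r₁+r₂} of subsets of {0,…,n−1}, each of cardinality r₁ or r₂, of length exactly r₁ + r₂, such that the ordered product M_{C_{r₁+r₂}}⋯M_{C_2}·M_{C_1} of the corresponding clique-averaging matrices equals (1/n)·J. -/
/-- The clique-averaging matrix of a subset `C` of `{0,…,n−1}`:
`(M_C)_{ij} = 1/|C|` if `i, j ∈ C`; `(M_C)_{ii} = 1` if `i ∉ C`; `0` otherwise. -/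
noncomputable def avgM {n : ℕ} (C : Finset (Fin n)) : Matrix (Fin n) (Fin n) ℝ :=
  Matrix.of fun i j => if i ∈ C ∧ j ∈ C then ((C.card : ℝ))⁻¹ else if i = j then 1 else 0

lemma avgM_list_prod {n : ℕ} {ι : Type*} [DecidableEq ι] (f : Fin n → ι) (c : ℕ)
    (hc : ∀ x, (Finset.univ.filter (fun i => f i = x)).card = c)
    (l : List ι) (hl : l.Nodup) :
    (l.map (fun x => avgM (Finset.univ.filter (fun i => f i = x)))).prod =
      Matrix.of fun i j =>
        if f i ∈ l ∧ f i = f j then (c : ℝ)⁻¹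
        else if i = j ∧ f i ∉ l then 1 else 0 := by
  induction l with
  | nil =>
    ext i j
    simp [Matrix.one_apply]
  | cons a l ih =>
    rw [List.map_cons, List.prod_cons, ih hl.of_cons]
    have ha : a ∉ l := (List.nodup_cons.mp hl).1
    ext i j
    rw [Matrix.mul_apply]
    by_cases hfi : f i = a
    · have h1 : ∀ k, avgM (Finset.univ.filter (fun m => f m = a)) i k
          = if f k = a then (c : ℝ)⁻¹ else 0 := by
        intro k
        by_cases hk : f k = a
        · simp [avgM, hfi, hk, hc]
        · have hik : i ≠ k := fun h => hk (h ▸ hfi)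
          simp [avgM, hk, hik]
      simp only [h1]
      by_cases hfj : f j = a
      · have h2 : ∀ k ∈ Finset.univ, (if f k = a then (c:ℝ)⁻¹ else 0) *
            Matrix.of (fun i j => if f i ∈ l ∧ f i = f j then (c:ℝ)⁻¹
              else if i = j ∧ f i ∉ l then 1 else 0) k j
            = if j = k then (c:ℝ)⁻¹ else 0 := by
          intro k _
          by_cases hk : f k = a
          · by_cases hkj : k = j
            · subst hkj; simp [Matrix.of_apply, hk, ha]
            · simp [Matrix.of_apply, hk, hkj, ha, Ne.symm hkj]
          · have hjk : j ≠ k := fun h => hk (h ▸ hfj)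
            simp [hk, hjk]
        rw [Finset.sum_congr rfl h2, Finset.sum_ite_eq, if_pos (Finset.mem_univ j)]
        simp [Matrix.of_apply, hfi, hfj]
      · have h2 : ∀ k ∈ Finset.univ, (if f k = a then (c:ℝ)⁻¹ else 0) *
            Matrix.of (fun i j => if f i ∈ l ∧ f i = f j then (c:ℝ)⁻¹
              else if i = j ∧ f i ∉ l then 1 else 0) k j = 0 := by
          intro k _
          by_cases hk : f k = a
          · have hkj : k ≠ j := fun h => hfj (h ▸ hk)
            simp [Matrix.of_apply, hk, hkj, ha]
          · simp [hk]
        rw [Finset.sum_congr rfl h2, Finset.sum_const_zero]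
        have hij : i ≠ j := fun h => hfj (h ▸ hfi)
        simp only [Matrix.of_apply, hfi]
        rw [if_neg (fun h => hfj (h.2.symm)), if_neg (fun h : i = j ∧ _ => hfj (h.1 ▸ hfi))]
    · have h1 : ∀ k, avgM (Finset.univ.filter (fun m => f m = a)) i k = if i = k then 1 else 0 := by
        intro k
        simp [avgM, hfi]
      simp only [h1, ite_mul, one_mul, zero_mul, Finset.sum_ite_eq, Finset.mem_univ, if_pos]
      simp [Matrix.of_apply, hfi]

lemma fiber_card_fst {n r₁ r₂ : ℕ} (e : Fin n ≃ Fin r₁ × Fin r₂) (a : Fin r₁) :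
    (Finset.univ.filter (fun i => (e i).1 = a)).card = r₂ := by
  have h1 : Finset.univ.filter (fun i : Fin n => (e i).1 = a)
      = Finset.image e.symm (Finset.univ.filter (fun p : Fin r₁ × Fin r₂ => p.1 = a)) := by
    ext i
    simp [Equiv.symm_apply_eq]
  have h2 : Finset.univ.filter (fun p : Fin r₁ × Fin r₂ => p.1 = a)
      = {a} ×ˢ Finset.univ := by
    ext ⟨p1, p2⟩; simp [eq_comm]
  rw [h1, Finset.card_image_of_injective _ e.symm.injective, h2, Finset.card_product]
  simp

lemma fiber_card_snd {n r₁ r₂ : ℕ} (e : Fin n ≃ Fin r₁ × Fin r₂) (b : Fin r₂) :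
    (Finset.univ.filter (fun i => (e i).2 = b)).card = r₁ := by
  have := fiber_card_fst ((e.trans (Equiv.prodComm _ _)) : Fin n ≃ Fin r₂ × Fin r₁) b
  refine Eq.trans ?_ this
  congr 1

theorem stmt7 {n r₁ r₂ : ℕ} (hr₁ : 2 ≤ r₁) (hr₂ : 2 ≤ r₂) (hn : n = r₁ * r₂) :
    ∃ Cs : Fin (r₁ + r₂) → Finset (Fin n),
      (∀ t, (Cs t).card = r₁ ∨ (Cs t).card = r₂) ∧
      (List.ofFn fun t => avgM (Cs t)).reverse.prod =
        (n : ℝ)⁻¹ • Matrix.of (fun _ _ => (1 : ℝ)) := by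
  have e : Fin n ≃ Fin r₁ × Fin r₂ := (finCongr hn).trans finProdFinEquiv.symm
  set Row : Fin r₁ → Finset (Fin n) :=
    fun a => Finset.univ.filter (fun i => (e i).1 = a) with hRow
  set Col : Fin r₂ → Finset (Fin n) :=
    fun b => Finset.univ.filter (fun i => (e i).2 = b) with hCol
  refine ⟨Fin.append Row Col, ?_, ?_⟩
  · intro t
    refine Fin.addCases (fun a => ?_) (fun b => ?_) t
    · right; rw [Fin.append_left]; exact fiber_card_fst e a
    · left; rw [Fin.append_right]; exact fiber_card_snd e b
  · have hsplit : (List.ofFn fun t => avgM (Fin.append Row Col t))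
        = (List.ofFn fun a : Fin r₁ => avgM (Row a)) ++
          (List.ofFn fun b : Fin r₂ => avgM (Col b)) := by
      rw [List.ofFn_add]
      congr 1
      · exact congrArg List.ofFn (funext fun a => by rw [show Fin.castLE _ a = Fin.castAdd r₂ a from rfl, Fin.append_left])
      · exact congrArg List.ofFn (funext fun b => by rw [Fin.append_right])
    rw [hsplit, List.reverse_append, List.prod_append]
    have hcolprod : (List.ofFn fun b : Fin r₂ => avgM (Col b)).reverse.prod
        = Matrix.of fun i j => if (e i).2 = (e j).2 then (r₁:ℝ)⁻¹ else 0 := by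
      rw [List.ofFn_eq_map, ← List.map_reverse]
      rw [avgM_list_prod (fun i => (e i).2) r₁ (fiber_card_snd e)
        _ (List.nodup_reverse.mpr (List.nodup_finRange r₂))]
      ext i j
      simp
    have hrowprod : (List.ofFn fun a : Fin r₁ => avgM (Row a)).reverse.prod
        = Matrix.of fun i j => if (e i).1 = (e j).1 then (r₂:ℝ)⁻¹ else 0 := by
      rw [List.ofFn_eq_map, ← List.map_reverse]
      rw [avgM_list_prod (fun i => (e i).1) r₂ (fiber_card_fst e)
        _ (List.nodup_reverse.mpr (List.nodup_finRange r₁))]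
      ext i j
      simp
    rw [hcolprod, hrowprod]
    ext i j
    rw [Matrix.mul_apply, Matrix.smul_apply]
    simp only [Matrix.of_apply]
    have key : (∑ x : Fin n, (if (e i).2 = (e x).2 then (r₁:ℝ)⁻¹ else 0) *
          (if (e x).1 = (e j).1 then (r₂:ℝ)⁻¹ else 0))
        = ∑ p : Fin r₁ × Fin r₂, (if (e i).2 = p.2 then (r₁:ℝ)⁻¹ else 0) *
          (if p.1 = (e j).1 then (r₂:ℝ)⁻¹ else 0) :=
      Fintype.sum_equiv e _ _ (fun x => rfl)
    rw [key, Fintype.sum_prod_type]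
    subst hn
    push_cast
    simp [Finset.sum_ite_eq, mul_comm, mul_inv]
end

section
/- Let n = r₁·r₂ with integers r₁, r₂ ≥ 2, and index vertices by {0,…,n−1}. For p ∈ {0,…,r₂−1} let C_p = {i : ⌊i/r₁⌋ = p} (a block of r₁ consecutive indices), and for q ∈ {0,…,r₁−1} let Q_q = {i : i mod r₁ = q} (a stride class of r₂ indices). Then the matrix product (M_{Q_{r₁−1}}⋯M_{Q_1}·M_{Q_0})·(M_{C_{r₂−1}}⋯M_{C_1}·M_{C_0}) of the corresponding clique-averaging matrices equals (1/n)·J. -/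
lemma prod_avgM {n : ℕ} (c : ℕ) (f : Fin n → Finset (Fin n)) :
    ∀ (L : List (Finset (Fin n))), L.Nodup →
    (∀ D ∈ L, D.card = c) →
    (∀ (i : Fin n), ∀ D ∈ L, i ∈ D ↔ D = f i) →
    (L.map avgM).prod = Matrix.of (fun i j =>
      if f i = f j ∧ f i ∈ L then (c : ℝ)⁻¹ else if i = j then 1 else 0)
  | [], _, _, _ => by
      ext i j
      simp [Matrix.one_apply]
  | D :: T, hnd, hcard, hf => by
      have hDT : D ∉ T := by simp [List.nodup_cons] at hnd; exact hnd.1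
      have ih := prod_avgM c f T (List.Nodup.of_cons hnd)
        (fun E hE => hcard E (List.mem_cons_of_mem _ hE))
        (fun i E hE => hf i E (List.mem_cons_of_mem _ hE))
      rw [List.map_cons, List.prod_cons, ih]
      ext i j
      rw [Matrix.mul_apply]
      by_cases hiD : i ∈ D
      · have hfi : f i = D := ((hf i D List.mem_cons_self).mp hiD).symm
        have hc : D.card = c := hcard D List.mem_cons_self
        have hrow : ∀ k, avgM D i k = if k ∈ D then (c : ℝ)⁻¹ else 0 := by
          intro k
          simp only [avgM, Matrix.of_apply, hiD, true_and]
          split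
          · rw [hc]
          · next hk =>
            split
            · next hik => subst hik; exact absurd hiD hk
            · rfl
        have hPT : ∀ k, k ∈ D → (Matrix.of (fun i j =>
            if f i = f j ∧ f i ∈ T then (c : ℝ)⁻¹ else if i = j then 1 else 0) : Matrix (Fin n) (Fin n) ℝ) k j
            = if k = j then 1 else 0 := by
          intro k hk
          have hfk : f k = D := ((hf k D List.mem_cons_self).mp hk).symm
          simp [hfk, hDT]
        have hsum : ∑ k, avgM D i k * (Matrix.of (fun i j =>
            if f i = f j ∧ f i ∈ T then (c : ℝ)⁻¹ else if i = j then 1 else 0) : Matrix (Fin n) (Fin n) ℝ) k j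
            = if j ∈ D then (c : ℝ)⁻¹ else 0 := by
          have : ∀ k, avgM D i k * (Matrix.of (fun i j =>
            if f i = f j ∧ f i ∈ T then (c : ℝ)⁻¹ else if i = j then 1 else 0) : Matrix (Fin n) (Fin n) ℝ) k j
            = if k = j then (if j ∈ D then (c : ℝ)⁻¹ else 0) else 0 := by
            intro k
            rw [hrow]
            by_cases hkD : k ∈ D
            · rw [hPT k hkD]
              by_cases hkj : k = j
              · subst hkj; simp [hkD]
              · simp [hkD, hkj]
            · by_cases hkj : k = j
              · subst hkj; simp [hkD]
              · simp [hkD, hkj]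
          rw [Finset.sum_congr rfl (fun k _ => this k)]
          simp
        rw [hsum]
        have hjD : j ∈ D ↔ D = f j := hf j D List.mem_cons_self
        by_cases hj : j ∈ D
        · have : f i = f j := by rw [hfi, hjD.mp hj]
          have hfj : f j = D := (hjD.mp hj).symm
          simp [this, hfj, hj]
        · have hne : f i ≠ f j := by
            rw [hfi]; intro h; exact hj (hjD.mpr h)
          have hij : i ≠ j := fun h => hj (h ▸ hiD)
          simp [hne, hij, hj]
      · have hrow : ∀ k, avgM D i k = if i = k then 1 else 0 := by
          intro k
          simp [avgM, hiD]
        have hsum : ∀ g : Fin n → ℝ, ∑ k, avgM D i k * g k = g i := by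
          intro g
          rw [Finset.sum_congr rfl (fun k _ => by rw [hrow k])]
          simp
        rw [hsum]
        have hfiD : f i ≠ D := by
          intro h; exact hiD ((hf i D List.mem_cons_self).mpr h.symm)
        simp only [Matrix.of_apply, List.mem_cons]
        by_cases hcond : f i = f j ∧ f i ∈ T
        · have : f j ∈ T := hcond.1 ▸ hcond.2
          simp [hcond, hcond.2, this]
        · have : ¬ (f i = f j ∧ (f i = D ∨ f i ∈ T)) := by
            rintro ⟨h1, h2 | h3⟩
            · exact hfiD h2
            · exact hcond ⟨h1, h3⟩
          simp only [hcond, this, if_false]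

theorem stmt8 {n r₁ r₂ : ℕ} (hr₁ : 2 ≤ r₁) (hr₂ : 2 ≤ r₂) (hn : n = r₁ * r₂)
    (C : Fin r₂ → Finset (Fin n)) (Q : Fin r₁ → Finset (Fin n))
    (hC : ∀ p, C p = Finset.univ.filter (fun i : Fin n => (i : ℕ) / r₁ = (p : ℕ)))
    (hQ : ∀ q, Q q = Finset.univ.filter (fun i : Fin n => (i : ℕ) % r₁ = (q : ℕ))) :
    (List.ofFn fun q => avgM (Q q)).reverse.prod *
        (List.ofFn fun p => avgM (C p)).reverse.prod =
      (n : ℝ)⁻¹ • Matrix.of (fun _ _ => (1 : ℝ)) := by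
  have hr₁0 : 0 < r₁ := by omega
  have hr₂0 : 0 < r₂ := by omega
  have memC : ∀ (i : Fin n) (p : Fin r₂), i ∈ C p ↔ (i : ℕ) / r₁ = (p : ℕ) := by
    intro i p; rw [hC p]; simp
  have memQ : ∀ (i : Fin n) (q : Fin r₁), i ∈ Q q ↔ (i : ℕ) % r₁ = (q : ℕ) := by
    intro i q; rw [hQ q]; simp
  have hdivlt : ∀ i : Fin n, (i : ℕ) / r₁ < r₂ := by
    intro i
    rw [Nat.div_lt_iff_lt_mul hr₁0, mul_comm r₂ r₁, ← hn]
    exact i.2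
  have hmodlt : ∀ i : Fin n, (i : ℕ) % r₁ < r₁ := fun i => Nat.mod_lt _ hr₁0
  have hlt : ∀ (p : Fin r₂) (q : Fin r₁), r₁ * (p : ℕ) + (q : ℕ) < n := by
    intro p q
    have h1 : r₁ * (p : ℕ) + (q : ℕ) < r₁ * ((p : ℕ) + 1) := by
      rw [Nat.mul_add, Nat.mul_one]; omega
    have h2 : r₁ * ((p : ℕ) + 1) ≤ r₁ * r₂ := Nat.mul_le_mul_left _ (by omega)
    omega
  have injC : Function.Injective C := by
    intro p p' h
    have hi : (⟨r₁ * (p : ℕ) + 0, hlt p ⟨0, hr₁0⟩⟩ : Fin n) ∈ C p := by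
      rw [memC]
      simp [Nat.mul_add_div hr₁0, Nat.mul_div_cancel_left _ hr₁0]
    rw [h, memC] at hi
    have : (⟨r₁ * (p : ℕ) + 0, hlt p ⟨0, hr₁0⟩⟩ : Fin n) ∈ C p := by
      rw [memC]; simp [Nat.mul_add_div hr₁0, Nat.mul_div_cancel_left _ hr₁0]
    rw [memC] at this
    exact Fin.ext (by omega)
  have injQ : Function.Injective Q := by
    intro q q' h
    have hqn : (q : ℕ) < n := by
      have := q.2
      have : r₁ ≤ n := by rw [hn]; exact Nat.le_mul_of_pos_right _ hr₂0
      omega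
    have hi : (⟨(q : ℕ), hqn⟩ : Fin n) ∈ Q q := by
      rw [memQ]; simp [Nat.mod_eq_of_lt q.2]
    rw [h, memQ] at hi
    simp [Nat.mod_eq_of_lt q.2] at hi
    exact Fin.ext hi
  have cardC : ∀ p, (C p).card = r₁ := by
    intro p
    have : (C p).card = (Finset.univ : Finset (Fin r₁)).card := by
      apply Finset.card_nbij' (fun i : Fin n => (⟨(i : ℕ) % r₁, hmodlt i⟩ : Fin r₁))
        (fun q : Fin r₁ => (⟨r₁ * (p : ℕ) + (q : ℕ), hlt p q⟩ : Fin n))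
      · intro a ha; simp
      · intro q _
        rw [Finset.mem_coe, memC]
        simp [Nat.mul_add_div hr₁0, Nat.div_eq_of_lt q.2]
      · intro a ha
        rw [Finset.mem_coe, memC] at ha
        apply Fin.ext
        show r₁ * (p : ℕ) + (a : ℕ) % r₁ = (a : ℕ)
        rw [← ha]
        exact Nat.div_add_mod _ _
      · intro q _
        apply Fin.ext
        simp [Nat.mul_add_mod, Nat.mod_eq_of_lt q.2]
    simpa using this
  have cardQ : ∀ q, (Q q).card = r₂ := by
    intro q
    have : (Q q).card = (Finset.univ : Finset (Fin r₂)).card := by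
      apply Finset.card_nbij' (fun i : Fin n => (⟨(i : ℕ) / r₁, hdivlt i⟩ : Fin r₂))
        (fun m : Fin r₂ => (⟨r₁ * (m : ℕ) + (q : ℕ), hlt m q⟩ : Fin n))
      · intro a ha; simp
      · intro m _
        rw [Finset.mem_coe, memQ]
        simp [Nat.mul_add_mod, Nat.mod_eq_of_lt q.2]
      · intro a ha
        rw [Finset.mem_coe, memQ] at ha
        apply Fin.ext
        show r₁ * ((a : ℕ) / r₁) + (q : ℕ) = (a : ℕ)
        rw [← ha]
        exact Nat.div_add_mod _ _
      · intro m _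
        apply Fin.ext
        simp [Nat.mul_add_div hr₁0, Nat.div_eq_of_lt q.2]
    simpa using this
  -- product of C matrices
  have hA : (List.ofFn fun p => avgM (C p)).reverse.prod =
      Matrix.of (fun i j : Fin n => if (i : ℕ) / r₁ = (j : ℕ) / r₁ then (r₁ : ℝ)⁻¹ else 0) := by
    have h1 : (List.ofFn fun p => avgM (C p)).reverse = ((List.ofFn C).reverse).map avgM := by
      simp only [List.map_reverse, List.map_ofFn]
      rfl
    rw [h1, prod_avgM r₁ (fun i => C ⟨(i : ℕ) / r₁, hdivlt i⟩) ((List.ofFn C).reverse)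
      (by rw [List.nodup_reverse]; exact List.nodup_ofFn.mpr injC)
      (by intro E hE; rw [List.mem_reverse, List.mem_ofFn] at hE
          obtain ⟨p, rfl⟩ := hE; exact cardC p)
      (by intro i E hE
          rw [List.mem_reverse, List.mem_ofFn] at hE
          obtain ⟨p, rfl⟩ := hE
          rw [memC]
          constructor
          · intro h; exact congrArg C (Fin.ext h.symm)
          · intro h
            have := injC h
            rw [this])]
    ext i j
    simp only [Matrix.of_apply]
    have hmem : C ⟨(i : ℕ) / r₁, hdivlt i⟩ ∈ (List.ofFn C).reverse := by
      rw [List.mem_reverse, List.mem_ofFn]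
      exact ⟨_, rfl⟩
    by_cases h : (i : ℕ) / r₁ = (j : ℕ) / r₁
    · have : C ⟨(i : ℕ) / r₁, hdivlt i⟩ = C ⟨(j : ℕ) / r₁, hdivlt j⟩ := congrArg C (Fin.ext h)
      have hmem' : C ⟨(j : ℕ) / r₁, hdivlt j⟩ ∈ List.ofFn C := by rw [List.mem_ofFn]; exact ⟨_, rfl⟩
      simp [this, hmem, hmem', h]
    · have hne : C ⟨(i : ℕ) / r₁, hdivlt i⟩ ≠ C ⟨(j : ℕ) / r₁, hdivlt j⟩ := by
        intro hc
        exact h (congrArg Fin.val (injC hc))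
      have hij : i ≠ j := by rintro rfl; exact h rfl
      simp [hne, hij, h]
  have hB : (List.ofFn fun q => avgM (Q q)).reverse.prod =
      Matrix.of (fun i j : Fin n => if (i : ℕ) % r₁ = (j : ℕ) % r₁ then (r₂ : ℝ)⁻¹ else 0) := by
    have h1 : (List.ofFn fun q => avgM (Q q)).reverse = ((List.ofFn Q).reverse).map avgM := by
      simp only [List.map_reverse, List.map_ofFn]
      rfl
    rw [h1, prod_avgM r₂ (fun i => Q ⟨(i : ℕ) % r₁, hmodlt i⟩) ((List.ofFn Q).reverse)
      (by rw [List.nodup_reverse]; exact List.nodup_ofFn.mpr injQ)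
      (by intro E hE; rw [List.mem_reverse, List.mem_ofFn] at hE
          obtain ⟨q, rfl⟩ := hE; exact cardQ q)
      (by intro i E hE
          rw [List.mem_reverse, List.mem_ofFn] at hE
          obtain ⟨q, rfl⟩ := hE
          rw [memQ]
          constructor
          · intro h; exact congrArg Q (Fin.ext h.symm)
          · intro h
            have := injQ h
            rw [this])]
    ext i j
    simp only [Matrix.of_apply]
    have hmem : Q ⟨(i : ℕ) % r₁, hmodlt i⟩ ∈ (List.ofFn Q).reverse := by
      rw [List.mem_reverse, List.mem_ofFn]
      exact ⟨_, rfl⟩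
    by_cases h : (i : ℕ) % r₁ = (j : ℕ) % r₁
    · have : Q ⟨(i : ℕ) % r₁, hmodlt i⟩ = Q ⟨(j : ℕ) % r₁, hmodlt j⟩ := congrArg Q (Fin.ext h)
      have hmem' : Q ⟨(j : ℕ) % r₁, hmodlt j⟩ ∈ List.ofFn Q := by rw [List.mem_ofFn]; exact ⟨_, rfl⟩
      simp [this, hmem, hmem', h]
    · have hne : Q ⟨(i : ℕ) % r₁, hmodlt i⟩ ≠ Q ⟨(j : ℕ) % r₁, hmodlt j⟩ := by
        intro hc
        exact h (congrArg Fin.val (injQ hc))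
      have hij : i ≠ j := by rintro rfl; exact h rfl
      simp [hne, hij, h]
  rw [hA, hB]
  ext i j
  rw [Matrix.mul_apply]
  set k₀ : Fin n := ⟨r₁ * ((j : ℕ) / r₁) + (i : ℕ) % r₁, hlt ⟨(j : ℕ) / r₁, hdivlt j⟩ ⟨(i : ℕ) % r₁, hmodlt i⟩⟩ with hk₀
  have key : ∀ k : Fin n,
      (Matrix.of (fun i j : Fin n => if (i : ℕ) % r₁ = (j : ℕ) % r₁ then (r₂ : ℝ)⁻¹ else 0)) i k *
      (Matrix.of (fun i j : Fin n => if (i : ℕ) / r₁ = (j : ℕ) / r₁ then (r₁ : ℝ)⁻¹ else 0)) k j =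
      if k = k₀ then (r₂ : ℝ)⁻¹ * (r₁ : ℝ)⁻¹ else 0 := by
    intro k
    simp only [Matrix.of_apply]
    by_cases hk : k = k₀
    · subst hk
      have h1 : (k₀ : ℕ) % r₁ = (i : ℕ) % r₁ := by
        rw [hk₀]
        simp [Nat.mul_add_mod, Nat.mod_eq_of_lt (hmodlt i)]
      have h2 : (k₀ : ℕ) / r₁ = (j : ℕ) / r₁ := by
        rw [hk₀]
        simp [Nat.mul_add_div hr₁0, Nat.div_eq_of_lt (hmodlt i)]
      rw [if_pos h1.symm, if_pos h2, if_pos rfl]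
    · by_cases c1 : (i : ℕ) % r₁ = (k : ℕ) % r₁
      · by_cases c2 : (k : ℕ) / r₁ = (j : ℕ) / r₁
        · exfalso
          apply hk
          apply Fin.ext
          rw [hk₀]
          show (k : ℕ) = r₁ * ((j : ℕ) / r₁) + (i : ℕ) % r₁
          rw [← c2, c1]
          exact (Nat.div_add_mod _ _).symm
        · simp [c1, c2, hk]
      · simp [c1, hk]
  rw [Finset.sum_congr rfl (fun k _ => key k)]
  rw [Finset.sum_ite_eq' Finset.univ k₀ (fun _ => (r₂ : ℝ)⁻¹ * (r₁ : ℝ)⁻¹)]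
  simp only [Finset.mem_univ, if_true, Matrix.smul_apply, Matrix.of_apply, smul_eq_mul, mul_one]
  rw [hn]
  push_cast
  rw [mul_inv]
  ring
end

section
/- Let m, n ≥ 2 be integers such that m divides n and every prime dividing n also divides m. Then there exists a finite sequence of subsets of {0,…,n−1}, each of cardinality exactly m, of length δ(n,m)·n/m, such that the ordered product of the corresponding clique-averaging matrices equals (1/n)·J. -/
/-- `cliqueDelta n m = max_{p prime, p ∣ m} ⌈v_p(n) / v_p(m)⌉`, where `v_p` is the
`p`-adic valuation. -/
def cliqueDelta (n m : ℕ) : ℕ :=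
  m.primeFactors.sup fun p =>
    (⌈((n.factorization p : ℚ)) / ((m.factorization p : ℚ))⌉).toNat

open scoped Classical
open Matrix

set_option linter.unusedSectionVars false

section ListPrelim

lemma rev_prod_join {α : Type*} [Monoid α] (ml : List (List α)) :
    ml.flatten.reverse.prod = ((ml.map (fun l => l.reverse.prod)).reverse).prod := by
  induction ml with
  | nil => simp
  | cons l ml ih =>
    rw [List.flatten_cons, List.reverse_append, List.prod_append, ih, List.map_cons,
      List.reverse_cons, List.prod_append, List.prod_cons, List.prod_nil, mul_one]

lemma ofFn_reverse {α : Type*} {k : ℕ} (f : Fin k → α) :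
    (List.ofFn f).reverse = List.ofFn (fun i => f i.rev) := by
  apply List.ext_getElem (by simp)
  intro i h1 h2
  rw [List.getElem_reverse, List.getElem_ofFn, List.getElem_ofFn]
  congr 1
  apply Fin.ext
  simp only [List.length_reverse, List.length_ofFn] at h1 h2 ⊢
  simp only [Fin.rev, Fin.val_mk]
  omega

end ListPrelim

noncomputable def blockM {n : ℕ} (m : ℕ) (l : List (Finset (Fin n))) :
    Matrix (Fin n) (Fin n) ℝ :=
  Matrix.of fun i j =>
    if ∃ C ∈ l, i ∈ C ∧ j ∈ C then ((m : ℝ))⁻¹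
    else if i = j ∧ ∀ C ∈ l, i ∉ C then 1 else 0

lemma avgM_transpose {n : ℕ} (C : Finset (Fin n)) : (avgM C)ᵀ = avgM C := by
  ext i j
  simp only [Matrix.transpose_apply, avgM, Matrix.of_apply, and_comm, eq_comm]

lemma blockM_transpose {n m : ℕ} (l : List (Finset (Fin n))) : (blockM m l)ᵀ = blockM m l := by
  ext i j
  simp only [Matrix.transpose_apply, blockM, Matrix.of_apply]
  congr 1
  · simp only [eq_iff_iff]; constructor <;> rintro ⟨C, hC, h1, h2⟩ <;> exact ⟨C, hC, h2, h1⟩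
  · congr 1
    simp only [eq_iff_iff]
    constructor <;> rintro ⟨h, h2⟩ <;> subst h <;> exact ⟨rfl, h2⟩

lemma prod_avgM_s10 {n m : ℕ} (l : List (Finset (Fin n)))
    (hd : l.Pairwise (fun C D => Disjoint C D))
    (hc : ∀ C ∈ l, C.card = m) :
    (l.map avgM).prod = blockM m l := by
  induction l with
  | nil =>
    ext i j
    simp [blockM, Matrix.one_apply]
  | cons C l ih =>
    rw [List.map_cons, List.prod_cons, ih hd.of_cons (fun D hD => hc D (List.mem_cons_of_mem _ hD))]
    have hCdisj : ∀ D ∈ l, Disjoint C D := fun D hD => (List.pairwise_cons.mp hd).1 D hD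
    have hCcard : C.card = m := hc C (List.mem_cons_self)
    ext i j
    simp only [Matrix.mul_apply, avgM, blockM, Matrix.of_apply]
    by_cases hiC : i ∈ C
    · have hstep : ∀ x : Fin n,
        (if i ∈ C ∧ x ∈ C then ((C.card : ℝ))⁻¹ else if i = x then 1 else 0) *
          (if ∃ D ∈ l, x ∈ D ∧ j ∈ D then ((m : ℝ))⁻¹
            else if x = j ∧ ∀ D ∈ l, x ∉ D then 1 else 0) =
        if x = j then (if j ∈ C then ((m : ℝ))⁻¹ else 0) else 0 := by
        intro x
        by_cases hxC : x ∈ C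
        · have hne : ¬ ∃ D ∈ l, x ∈ D ∧ j ∈ D := by
            rintro ⟨D, hD, hxD, _⟩
            exact Finset.disjoint_left.mp (hCdisj D hD) hxC hxD
          have hnotin : ∀ D ∈ l, x ∉ D := fun D hD hxD =>
            Finset.disjoint_left.mp (hCdisj D hD) hxC hxD
          rw [if_pos ⟨hiC, hxC⟩, if_neg hne]
          by_cases hxj : x = j
          · subst hxj
            rw [if_pos ⟨rfl, hnotin⟩, if_pos rfl, if_pos hxC, hCcard, mul_one]
          · rw [if_neg (fun h => hxj h.1), if_neg hxj, mul_zero]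
        · have h1 : ¬ (i ∈ C ∧ x ∈ C) := fun h => hxC h.2
          have hne' : i ≠ x := fun h => hxC (h ▸ hiC)
          rw [if_neg h1, if_neg hne', zero_mul]
          by_cases hxj : x = j
          · subst hxj; rw [if_pos rfl, if_neg hxC]
          · rw [if_neg hxj]
      rw [Finset.sum_congr rfl (fun x _ => hstep x), Finset.sum_ite_eq' Finset.univ j]
      simp only [Finset.mem_univ, if_true]
      by_cases hjC : j ∈ C
      · have hex : ∃ D ∈ C :: l, i ∈ D ∧ j ∈ D := ⟨C, List.mem_cons_self, hiC, hjC⟩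
        rw [if_pos hex, if_pos hjC]
      · have hnex : ¬ ∃ D ∈ C :: l, i ∈ D ∧ j ∈ D := by
          rintro ⟨D, hD, hiD, hjD⟩
          rcases List.mem_cons.mp hD with rfl | hD'
          · exact hjC hjD
          · exact Finset.disjoint_left.mp (hCdisj D hD') hiC hiD
        have hni : ¬ (i = j ∧ ∀ D ∈ C :: l, i ∉ D) := by
          rintro ⟨rfl, h⟩; exact h C (List.mem_cons_self) hiC
        rw [if_neg hnex, if_neg hjC, if_neg hni]
    · have hstep : ∀ x : Fin n,
        (if i ∈ C ∧ x ∈ C then ((C.card : ℝ))⁻¹ else if i = x then 1 else 0) *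
          (if ∃ D ∈ l, x ∈ D ∧ j ∈ D then ((m : ℝ))⁻¹
            else if x = j ∧ ∀ D ∈ l, x ∉ D then 1 else 0) =
        if i = x then (if ∃ D ∈ l, x ∈ D ∧ j ∈ D then ((m : ℝ))⁻¹
            else if x = j ∧ ∀ D ∈ l, x ∉ D then 1 else 0) else 0 := by
        intro x
        have h1 : ¬ (i ∈ C ∧ x ∈ C) := fun h => hiC h.1
        rw [if_neg h1]
        by_cases hix : i = x
        · rw [if_pos hix, if_pos hix, one_mul]
        · rw [if_neg hix, if_neg hix, zero_mul]
      rw [Finset.sum_congr rfl (fun x _ => hstep x), Finset.sum_ite_eq Finset.univ i]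
      simp only [Finset.mem_univ, if_true]
      congr 1
      · simp only [eq_iff_iff]
        constructor
        · rintro ⟨D, hD, h⟩; exact ⟨D, List.mem_cons_of_mem _ hD, h⟩
        · rintro ⟨D, hD, h⟩
          rcases List.mem_cons.mp hD with rfl | hD'
          · exact absurd h.1 hiC
          · exact ⟨D, hD', h⟩
      · congr 1
        simp only [eq_iff_iff]
        constructor
        · rintro ⟨h1, h2⟩
          refine ⟨h1, fun D hD => ?_⟩
          rcases List.mem_cons.mp hD with rfl | hD'
          · exact hiC
          · exact h2 D hD'
        · rintro ⟨h1, h2⟩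
          exact ⟨h1, fun D hD => h2 D (List.mem_cons_of_mem _ hD)⟩

lemma reverse_prod_avgM {n m : ℕ} (l : List (Finset (Fin n)))
    (hd : l.Pairwise (fun C D => Disjoint C D))
    (hc : ∀ C ∈ l, C.card = m) :
    (l.map avgM).reverse.prod = blockM m l := by
  have h1 : ((l.map avgM).prod)ᵀ = ((l.map avgM).map Matrix.transpose).reverse.prod :=
    Matrix.transpose_list_prod _
  have h2 : (l.map avgM).map Matrix.transpose = l.map avgM := by
    rw [List.map_map]
    apply List.map_congr_left
    intro C _
    exact avgM_transpose C
  rw [h2] at h1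
  rw [← h1, prod_avgM_s10 l hd hc, blockM_transpose]


section CosetM

variable {N : ℕ} {G : Type*} [AddCommGroup G] [Fintype G]

/-- number of elements of a subgroup, as a finset cardinality -/
noncomputable def fcard (H : AddSubgroup G) : ℕ :=
  (Finset.univ.filter (fun x : G => x ∈ H)).card

lemma fcard_pos (H : AddSubgroup G) : 0 < fcard H :=
  Finset.card_pos.mpr ⟨0, Finset.mem_filter.mpr ⟨Finset.mem_univ _, H.zero_mem⟩⟩

/-- the coset-averaging matrix -/
noncomputable def cosetM (e : Fin N ≃ G) (H : AddSubgroup G) : Matrix (Fin N) (Fin N) ℝ :=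
  Matrix.of fun i j => if e i - e j ∈ H then ((fcard H : ℝ))⁻¹ else 0

lemma fcard_bot : fcard (⊥ : AddSubgroup G) = 1 := by
  rw [fcard]
  rw [show (Finset.univ.filter (fun x : G => x ∈ (⊥ : AddSubgroup G))) = {0} by
    ext x; simp [AddSubgroup.mem_bot]]
  simp

lemma fcard_top : fcard (⊤ : AddSubgroup G) = Fintype.card G := by
  rw [fcard]
  simp

lemma cosetM_bot (e : Fin N ≃ G) : cosetM e (⊥ : AddSubgroup G) = 1 := by
  ext i j
  rw [cosetM]
  simp only [Matrix.of_apply, AddSubgroup.mem_bot, sub_eq_zero, fcard_bot, Matrix.one_apply]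
  by_cases h : i = j
  · subst h; simp
  · rw [if_neg (fun hh => h (e.injective hh)), if_neg h]

lemma cosetM_top (e : Fin N ≃ G) :
    cosetM e (⊤ : AddSubgroup G) = (N : ℝ)⁻¹ • Matrix.of (fun _ _ => (1 : ℝ)) := by
  have hN : Fintype.card G = N := by
    rw [← Fintype.card_congr e, Fintype.card_fin]
  ext i j
  rw [cosetM]
  simp [fcard_top, hN]

lemma cosetM_mul (e : Fin N ≃ G) (H K : AddSubgroup G)
    (hcard : fcard (H ⊔ K) * fcard (H ⊓ K) = fcard H * fcard K) :
    cosetM e H * cosetM e K = cosetM e (H ⊔ K) := by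
  ext i j
  rw [Matrix.mul_apply]
  simp only [cosetM, Matrix.of_apply]
  have hterm : ∀ x : Fin N,
      (if e i - e x ∈ H then ((fcard H : ℝ))⁻¹ else 0) *
        (if e x - e j ∈ K then ((fcard K : ℝ))⁻¹ else 0) =
      if e i - e x ∈ H ∧ e x - e j ∈ K then ((fcard H : ℝ))⁻¹ * ((fcard K : ℝ))⁻¹ else 0 := by
    intro x
    by_cases h1 : e i - e x ∈ H <;> by_cases h2 : e x - e j ∈ K <;>
      simp [h1, h2]
  rw [Finset.sum_congr rfl (fun x _ => hterm x), Finset.sum_ite, Finset.sum_const,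
    Finset.sum_const_zero, add_zero]
  by_cases hd : e i - e j ∈ H ⊔ K
  · rw [if_pos hd]
    obtain ⟨h₀, hh₀, k₀, hk₀, hsum⟩ := AddSubgroup.mem_sup.mp hd
    have hcount : (Finset.univ.filter (fun x : Fin N => e i - e x ∈ H ∧ e x - e j ∈ K)).card
        = fcard (H ⊓ K) := by
      rw [fcard]
      apply Finset.card_bij (fun x _ => e x - e j - k₀)
      · intro x hx
        simp only [Finset.mem_filter, Finset.mem_univ, true_and] at hx ⊢
        constructor
        · have hh : h₀ = e i - e j - k₀ := by rw [← hsum]; abel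
          have : e x - e j - k₀ = h₀ - (e i - e x) := by rw [hh]; abel
          rw [this]
          exact AddSubgroup.sub_mem _ hh₀ hx.1
        · exact AddSubgroup.sub_mem _ hx.2 hk₀
      · intro x hx y hy hxy
        apply e.injective
        have : e x - e j - k₀ + (e j + k₀) = e y - e j - k₀ + (e j + k₀) := by rw [hxy]
        calc e x = e x - e j - k₀ + (e j + k₀) := by abel
        _ = e y - e j - k₀ + (e j + k₀) := this
        _ = e y := by abel
      · intro c hc
        simp only [Finset.mem_filter, Finset.mem_univ, true_and, AddSubgroup.mem_inf] at hc
        refine ⟨e.symm (c + k₀ + e j), ?_, ?_⟩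
        · simp only [Finset.mem_filter, Finset.mem_univ, true_and, Equiv.apply_symm_apply]
          constructor
          · have : e i - (c + k₀ + e j) = h₀ - c := by
              have : e i = h₀ + k₀ + e j := by rw [hsum]; abel
              rw [this]; abel
            rw [this]
            exact AddSubgroup.sub_mem _ hh₀ hc.1
          · have : c + k₀ + e j - e j = c + k₀ := by abel
            rw [this]
            exact AddSubgroup.add_mem _ hc.2 hk₀
        · simp only [Equiv.apply_symm_apply]
          abel
    rw [hcount]
    have h1 : (fcard H : ℝ) ≠ 0 := Nat.cast_ne_zero.mpr (fcard_pos H).ne'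
    have h2 : (fcard K : ℝ) ≠ 0 := Nat.cast_ne_zero.mpr (fcard_pos K).ne'
    have h3 : (fcard (H ⊔ K) : ℝ) ≠ 0 := Nat.cast_ne_zero.mpr (fcard_pos _).ne'
    have hcR : (fcard (H ⊔ K) : ℝ) * (fcard (H ⊓ K) : ℝ) = (fcard H : ℝ) * (fcard K : ℝ) := by
      rw [← Nat.cast_mul, ← Nat.cast_mul, hcard]
    rw [nsmul_eq_mul, ← mul_inv, ← hcR, mul_inv, ← mul_assoc, mul_comm (fcard (H ⊓ K) : ℝ),
      mul_assoc, mul_inv_cancel₀ (Nat.cast_ne_zero.mpr (fcard_pos _).ne'), mul_one]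
  · rw [if_neg hd]
    have : (Finset.univ.filter (fun x : Fin N => e i - e x ∈ H ∧ e x - e j ∈ K)) = ∅ := by
      ext x
      simp only [Finset.mem_filter, Finset.mem_univ, true_and, Finset.notMem_empty, iff_false]
      rintro ⟨h1, h2⟩
      exact hd (by
        have : e i - e j = (e i - e x) + (e x - e j) := by abel
        rw [this]
        exact AddSubgroup.add_mem _ (AddSubgroup.mem_sup_left h1) (AddSubgroup.mem_sup_right h2))
    rw [this]
    simp



/-- the set of cosets of `H`, pulled back to `Fin N` -/
noncomputable def cosets (e : Fin N ≃ G) (H : AddSubgroup G) : Finset (Finset (Fin N)) :=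
  Finset.univ.image (fun g : G => Finset.univ.filter (fun i => e i - g ∈ H))

lemma coset_eq (e : Fin N ≃ G) (H : AddSubgroup G) {g g' : G} {i : Fin N}
    (h1 : e i - g ∈ H) (h2 : e i - g' ∈ H) :
    Finset.univ.filter (fun j => e j - g ∈ H) = Finset.univ.filter (fun j => e j - g' ∈ H) := by
  have hd : g' - g ∈ H := by
    have : g' - g = (e i - g) - (e i - g') := by abel
    rw [this]; exact AddSubgroup.sub_mem _ h1 h2
  ext j
  simp only [Finset.mem_filter, Finset.mem_univ, true_and]
  constructor
  · intro h
    have : e j - g' = (e j - g) - (g' - g) := by abel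
    rw [this]; exact AddSubgroup.sub_mem _ h hd
  · intro h
    have : e j - g = (e j - g') + (g' - g) := by abel
    rw [this]; exact AddSubgroup.add_mem _ h hd

lemma cosets_card (e : Fin N ≃ G) (H : AddSubgroup G) {C : Finset (Fin N)}
    (hC : C ∈ cosets e H) : C.card = fcard H := by
  obtain ⟨g, -, rfl⟩ := Finset.mem_image.mp hC
  rw [fcard]
  apply Finset.card_bij (fun i _ => e i - g)
  · intro i hi
    simp only [Finset.mem_filter, Finset.mem_univ, true_and] at hi ⊢
    exact hi
  · intro i _ j _ hij
    apply e.injective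
    have : e i - g + g = e j - g + g := by rw [hij]
    calc e i = e i - g + g := by abel
    _ = e j - g + g := this
    _ = e j := by abel
  · intro h hh
    simp only [Finset.mem_filter, Finset.mem_univ, true_and] at hh
    exact ⟨e.symm (h + g), by simp [Equiv.apply_symm_apply, hh], by simp⟩

lemma cosets_disj (e : Fin N ≃ G) (H : AddSubgroup G) :
    ((cosets e H).toList).Pairwise (fun C D => Disjoint C D) := by
  apply (Finset.nodup_toList _).pairwise_of_forall_ne
  intro C hC D hD hne
  rw [Finset.mem_toList] at hC hD
  obtain ⟨g, -, rfl⟩ := Finset.mem_image.mp hC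
  obtain ⟨g', -, rfl⟩ := Finset.mem_image.mp hD
  rw [Finset.disjoint_left]
  intro i hi hi'
  simp only [Finset.mem_filter, Finset.mem_univ, true_and] at hi hi'
  exact hne (coset_eq e H hi hi')

lemma mem_coset_self (e : Fin N ≃ G) (H : AddSubgroup G) (i : Fin N) :
    i ∈ Finset.univ.filter (fun j => e j - e i ∈ H) ∧
      Finset.univ.filter (fun j => e j - e i ∈ H) ∈ cosets e H := by
  constructor
  · simp [H.zero_mem]
  · exact Finset.mem_image.mpr ⟨e i, Finset.mem_univ _, rfl⟩

lemma blockM_cosets (e : Fin N ≃ G) (H : AddSubgroup G) :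
    blockM (fcard H) ((cosets e H).toList) = cosetM e H := by
  ext i j
  simp only [blockM, cosetM, Matrix.of_apply]
  by_cases h : e i - e j ∈ H
  · rw [if_pos h]
    have hex : ∃ C ∈ (cosets e H).toList, i ∈ C ∧ j ∈ C := by
      refine ⟨Finset.univ.filter (fun k => e k - e j ∈ H), ?_, ?_, ?_⟩
      · rw [Finset.mem_toList]; exact (mem_coset_self e H j).2
      · simp [h]
      · exact (mem_coset_self e H j).1
    rw [if_pos hex]
  · rw [if_neg h]
    have hnex : ¬ ∃ C ∈ (cosets e H).toList, i ∈ C ∧ j ∈ C := by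
      rintro ⟨C, hC, hiC, hjC⟩
      rw [Finset.mem_toList] at hC
      obtain ⟨g, -, rfl⟩ := Finset.mem_image.mp hC
      simp only [Finset.mem_filter, Finset.mem_univ, true_and] at hiC hjC
      exact h (by
        have : e i - e j = (e i - g) - (e j - g) := by abel
        rw [this]; exact AddSubgroup.sub_mem _ hiC hjC)
    rw [if_neg hnex]
    have : ¬ (i = j ∧ ∀ C ∈ (cosets e H).toList, i ∉ C) := by
      rintro ⟨rfl, hall⟩
      exact hall _ (Finset.mem_toList.mpr (mem_coset_self e H i).2) (mem_coset_self e H i).1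
    rw [if_neg this]

lemma cosets_length (e : Fin N ≃ G) (H : AddSubgroup G) :
    (cosets e H).card * fcard H = N := by
  have hcover : Finset.univ = (cosets e H).biUnion id := by
    ext i
    simp only [Finset.mem_univ, true_iff, Finset.mem_biUnion, id]
    exact ⟨_, (mem_coset_self e H i).2, (mem_coset_self e H i).1⟩
  have hdisj : ∀ C ∈ cosets e H, ∀ D ∈ cosets e H, C ≠ D → Disjoint (id C) (id D) := by
    intro C hC D hD hne
    obtain ⟨g, -, rfl⟩ := Finset.mem_image.mp hC
    obtain ⟨g', -, rfl⟩ := Finset.mem_image.mp hD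
    rw [Finset.disjoint_left]
    intro i hi hi'
    simp only [id, Finset.mem_filter, Finset.mem_univ, true_and] at hi hi'
    exact hne (coset_eq e H hi hi')
  have := Finset.card_biUnion hdisj
  rw [← hcover] at this
  rw [Finset.card_univ, Fintype.card_fin] at this
  have h2 : ∑ u ∈ cosets e H, (id u : Finset (Fin N)).card = (cosets e H).card * fcard H := by
    rw [Finset.sum_congr rfl (fun C hC => by simpa using cosets_card e H hC),
      Finset.sum_const, smul_eq_mul]
  rw [← h2]; exact this.symm


end CosetM

section Windows

variable {ι : Type*} [Fintype ι] [DecidableEq ι] (c : ι → ℕ) [∀ i, NeZero (c i)] (b : ι → ℕ)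

abbrev WinG (c : ι → ℕ) (b : ι → ℕ) : Type _ := (i : ι) → Fin (b i) → ZMod (c i)

def windowSub (W : (i : ι) → Finset (Fin (b i))) : AddSubgroup (WinG c b) where
  carrier := {x | ∀ i, ∀ j, j ∉ W i → x i j = 0}
  zero_mem' := fun i j _ => rfl
  add_mem' := by
    intro x y hx hy i j hj
    simp only [Pi.add_apply, hx i j hj, hy i j hj, add_zero]
  neg_mem' := by
    intro x hx i j hj
    simp only [Pi.neg_apply, hx i j hj, neg_zero]

lemma mem_windowSub {W : (i : ι) → Finset (Fin (b i))} {x : WinG c b} :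
    x ∈ windowSub c b W ↔ ∀ i, ∀ j, j ∉ W i → x i j = 0 := Iff.rfl

noncomputable def windowEquiv (W : (i : ι) → Finset (Fin (b i))) :
    {x : WinG c b // x ∈ windowSub c b W} ≃ ((i : ι) → {j // j ∈ W i} → ZMod (c i)) where
  toFun x i j := x.1 i j.1
  invFun y := ⟨fun i j => if h : j ∈ W i then y i ⟨j, h⟩ else 0, by
    intro i j hj
    exact dif_neg hj⟩
  left_inv := by
    intro x
    apply Subtype.ext
    funext i j
    by_cases h : j ∈ W i
    · simp only [dif_pos h]
    · simp only [dif_neg h]; exact (x.2 i j h).symm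
  right_inv := by
    intro y
    funext i j
    simp only [dif_pos j.2]

lemma fcard_windowSub (W : (i : ι) → Finset (Fin (b i))) :
    fcard (windowSub c b W) = ∏ i, (c i) ^ (W i).card := by
  rw [fcard, ← Fintype.card_subtype, Fintype.card_congr (windowEquiv c b W), Fintype.card_pi]
  congr 1
  funext i
  rw [Fintype.card_fun, ZMod.card]
  congr 1
  exact (Fintype.card_congr (Equiv.refl _)).trans (Fintype.card_coe (W i))

lemma windowSub_sup (W W' : (i : ι) → Finset (Fin (b i))) :
    windowSub c b W ⊔ windowSub c b W' = windowSub c b (fun i => W i ∪ W' i) := by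
  apply le_antisymm
  · apply sup_le
    · intro x hx i j hj
      exact hx i j (fun h => hj (Finset.mem_union_left _ h))
    · intro x hx i j hj
      exact hx i j (fun h => hj (Finset.mem_union_right _ h))
  · intro x hx
    set y : WinG c b := fun i j => if j ∈ W i then x i j else 0 with hy
    have hyW : y ∈ windowSub c b W := by
      intro i j hj
      simp only [hy, if_neg hj]
    have hzW : x - y ∈ windowSub c b W' := by
      intro i j hj
      simp only [Pi.sub_apply, hy]
      by_cases h : j ∈ W i
      · rw [if_pos h, sub_self]
      · rw [if_neg h, sub_zero]
        exact hx i j (fun hh => (Finset.mem_union.mp hh).elim h hj)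
    have : x = y + (x - y) := by abel
    rw [this]
    exact AddSubgroup.add_mem_sup hyW hzW

lemma windowSub_inf (W W' : (i : ι) → Finset (Fin (b i))) :
    windowSub c b W ⊓ windowSub c b W' = windowSub c b (fun i => W i ∩ W' i) := by
  apply le_antisymm
  · rintro x ⟨h1, h2⟩ i j hj
    by_cases h : j ∈ W i
    · exact h2 i j (fun hh => hj (Finset.mem_inter.mpr ⟨h, hh⟩))
    · exact h1 i j h
  · intro x hx
    constructor
    · intro i j hj
      exact hx i j (fun h => hj (Finset.mem_inter.mp h).1)
    · intro i j hj
      exact hx i j (fun h => hj (Finset.mem_inter.mp h).2)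

lemma windowSub_card_identity (W W' : (i : ι) → Finset (Fin (b i))) :
    fcard (windowSub c b W ⊔ windowSub c b W') * fcard (windowSub c b W ⊓ windowSub c b W')
      = fcard (windowSub c b W) * fcard (windowSub c b W') := by
  rw [windowSub_sup, windowSub_inf, fcard_windowSub, fcard_windowSub, fcard_windowSub,
    fcard_windowSub, ← Finset.prod_mul_distrib, ← Finset.prod_mul_distrib]
  apply Finset.prod_congr rfl
  intro i _
  rw [← pow_add, ← pow_add, Finset.card_union_add_card_inter]

lemma windowSub_empty : windowSub c b (fun _ => ∅) = ⊥ := by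
  apply le_antisymm
  · intro x hx
    rw [AddSubgroup.mem_bot]
    funext i j
    exact hx i j (Finset.notMem_empty j)
  · intro x hx i j _
    rw [AddSubgroup.mem_bot.mp hx]
    rfl

lemma windowSub_univ : windowSub c b (fun i => Finset.univ) = ⊤ := by
  apply le_antisymm le_top
  intro x _ i j hj
  exact absurd (Finset.mem_univ j) hj



lemma fold_windows {N : ℕ} (e : Fin N ≃ WinG c b) (Ws : List ((i : ι) → Finset (Fin (b i)))) :
    (Ws.map (fun Wf => cosetM e (windowSub c b Wf))).prod
      = cosetM e (windowSub c b (Ws.foldr (fun Wf acc i => Wf i ∪ acc i) (fun _ => ∅))) := by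
  induction Ws with
  | nil =>
    rw [List.map_nil, List.prod_nil, List.foldr_nil, windowSub_empty, cosetM_bot]
  | cons Wf Ws ih =>
    rw [List.map_cons, List.prod_cons, ih,
      cosetM_mul e _ _ (windowSub_card_identity c b _ _), List.foldr_cons, windowSub_sup]

lemma mem_foldr_union (Ws : List ((i : ι) → Finset (Fin (b i)))) (p : ι) (j : Fin (b p)) :
    j ∈ (Ws.foldr (fun Wf acc i => Wf i ∪ acc i) (fun _ => ∅)) p ↔ ∃ Wf ∈ Ws, j ∈ Wf p := by
  induction Ws with
  | nil => simp
  | cons Wf Ws ih => simp [Finset.mem_union, ih]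

end Windows

-- interval card lemma
lemma card_interval_fin (bb s aa : ℕ) (h : s + aa ≤ bb) :
    (Finset.univ.filter (fun j : Fin bb => s ≤ j.1 ∧ j.1 < s + aa)).card = aa := by
  have hcard : (Finset.univ.filter (fun j : Fin bb => s ≤ j.1 ∧ j.1 < s + aa)).card
      = (Finset.range aa).card := by
    apply Finset.card_bij' (fun (j : Fin bb) (_ : j ∈ _) => j.1 - s)
      (fun k (hk : k ∈ Finset.range aa) => (⟨s + k, by
        rw [Finset.mem_range] at hk; omega⟩ : Fin bb))
    all_goals intro x hx
    all_goals try rw [Finset.mem_range] at hx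
    all_goals try simp only [Finset.mem_filter, Finset.mem_univ, true_and] at hx
    all_goals try rw [Finset.mem_range]
    all_goals try simp only [Finset.mem_filter, Finset.mem_univ, true_and]
    all_goals try simp only [Fin.ext_iff, Fin.val_mk]
    all_goals omega
  rw [hcard, Finset.card_range]

-- ceil bound: if 1 ≤ a, 1 ≤ b then (b-1)/a + 1 ≤ ⌈(b:ℚ)/a⌉.toNat
lemma ceil_bound (a b : ℕ) (ha : 1 ≤ a) (hb : 1 ≤ b) :
    (b - 1) / a + 1 ≤ (⌈((b : ℚ)) / ((a : ℚ))⌉).toNat := by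
  have haQ : (0 : ℚ) < a := by exact_mod_cast ha
  have hlt : (((b - 1) / a : ℕ) : ℚ) < (b : ℚ) / (a : ℚ) := by
    rw [lt_div_iff₀ haQ]
    have h1 : ((b - 1) / a) * a ≤ b - 1 := Nat.div_mul_le_self _ _
    have h2 : ((b-1)/a) * a < b := by omega
    exact_mod_cast h2
  have hceil : (((b - 1) / a : ℕ) : ℤ) < ⌈(b : ℚ) / (a : ℚ)⌉ := by
    rw [Int.lt_ceil]
    exact_mod_cast hlt
  have hpos : (0 : ℤ) ≤ ⌈(b : ℚ) / (a : ℚ)⌉ := Int.ceil_nonneg (by positivity)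
  omega


lemma prod_primeFactors_factorization {k : ℕ} (hk : k ≠ 0) :
    ∏ p ∈ k.primeFactors, p ^ k.factorization p = k := by
  have h := Nat.factorization_prod_pow_eq_self hk
  rwa [Finsupp.prod, Nat.support_factorization] at h

section Main

abbrev pc (n : ℕ) : ↥n.primeFactors → ℕ := fun p => (p : ℕ)
abbrev pb (n : ℕ) : ↥n.primeFactors → ℕ := fun p => n.factorization (p : ℕ)
abbrev pa (n m : ℕ) : ↥n.primeFactors → ℕ := fun p => m.factorization (p : ℕ)

instance (n : ℕ) (p : ↥n.primeFactors) : NeZero (pc n p) :=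
  ⟨(Nat.prime_of_mem_primeFactors p.2).ne_zero⟩

noncomputable def mainW (n m t : ℕ) : (p : ↥n.primeFactors) → Finset (Fin (pb n p)) :=
  fun p => Finset.univ.filter (fun j : Fin (pb n p) =>
    min (t * pa n m p) (pb n p - pa n m p) ≤ j.1 ∧
      j.1 < min (t * pa n m p) (pb n p - pa n m p) + pa n m p)

set_option maxHeartbeats 1000000 in
theorem stmt10 {n m : ℕ} (hm : 2 ≤ m) (hn : 2 ≤ n) (hdvd : m ∣ n)
    (hprimes : ∀ p : ℕ, p.Prime → p ∣ n → p ∣ m) :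
    ∃ Cs : Fin (cliqueDelta n m * n / m) → Finset (Fin n),
      (∀ t, (Cs t).card = m) ∧
      (List.ofFn fun t => avgM (Cs t)).reverse.prod =
        (n : ℝ)⁻¹ • Matrix.of (fun _ _ => (1 : ℝ)) := by
  have hm0 : m ≠ 0 := by omega
  have hn0 : n ≠ 0 := by omega
  have hPF : n.primeFactors = m.primeFactors := by
    ext p
    simp only [Nat.mem_primeFactors]
    constructor
    · rintro ⟨hp, hd, -⟩; exact ⟨hp, hprimes p hp hd, hm0⟩
    · rintro ⟨hp, hd, -⟩; exact ⟨hp, hd.trans hdvd, hn0⟩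
  set δ := cliqueDelta n m with hδdef
  -- per-prime numeric facts
  have hple : ∀ p : ↥n.primeFactors, pa n m p ≤ pb n p := by
    intro p
    have h := (Nat.factorization_le_iff_dvd hm0 hn0).mpr hdvd
    exact h (p : ℕ)
  have hpa1 : ∀ p : ↥n.primeFactors, 1 ≤ pa n m p := by
    intro p
    have hp := Nat.prime_of_mem_primeFactors p.2
    have hdm : (p : ℕ) ∣ m := hprimes p hp (Nat.dvd_of_mem_primeFactors p.2)
    exact hp.factorization_pos_of_dvd hm0 hdm
  have hδp : ∀ p : ↥n.primeFactors, (⌈((pb n p : ℚ)) / ((pa n m p : ℚ))⌉).toNat ≤ δ := by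
    intro p
    have hmem : (p : ℕ) ∈ m.primeFactors := hPF ▸ p.2
    exact Finset.le_sup (f := fun q =>
      (⌈((n.factorization q : ℚ)) / ((m.factorization q : ℚ))⌉).toNat) hmem
  -- window cards
  have hWcard : ∀ (t : ℕ) (p : ↥n.primeFactors), (mainW n m t p).card = pa n m p := by
    intro t p
    apply card_interval_fin
    have h1 := hple p
    have h2 := hpa1 p
    omega
  -- coverage
  have hWcover : ∀ (p : ↥n.primeFactors) (j : Fin (pb n p)),
      ∃ t : Fin δ, j ∈ mainW n m t p := by
    intro p j
    have ha := hpa1 p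
    have hb := hple p
    have hbpos : 1 ≤ pb n p := le_trans ha hb
    have hceil := ceil_bound (pa n m p) (pb n p) ha hbpos
    have hδpp := hδp p
    have hjb := j.2
    have hdiv : j.1 / pa n m p ≤ (pb n p - 1) / pa n m p :=
      Nat.div_le_div_right (by omega)
    have htlt : j.1 / pa n m p < δ := by omega
    refine ⟨⟨j.1 / pa n m p, htlt⟩, ?_⟩
    simp only [mainW, Finset.mem_filter, Finset.mem_univ, true_and, Fin.val_mk]
    have hdm' : pa n m p * (j.1 / pa n m p) + j.1 % pa n m p = j.1 := Nat.div_add_mod _ _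
    have hmul : (j.1 / pa n m p) * pa n m p + j.1 % pa n m p = j.1 := by
      rw [mul_comm] at hdm'; exact hdm'
    have hmod : j.1 % pa n m p < pa n m p := Nat.mod_lt _ (by omega)
    omega
  -- subgroup cards
  have hfcard : ∀ t : ℕ, fcard (windowSub (pc n) (pb n) (mainW n m t)) = m := by
    intro t
    refine (fcard_windowSub (pc n) (pb n) (mainW n m t)).trans ?_
    have hstep : ∀ p : ↥n.primeFactors,
        (pc n p) ^ (mainW n m t p).card = (p : ℕ) ^ m.factorization (p : ℕ) := by
      intro p; rw [hWcard t p]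
    rw [Finset.prod_congr rfl (fun p _ => hstep p),
      Finset.prod_coe_sort n.primeFactors (fun q => q ^ m.factorization q), hPF]
    exact prod_primeFactors_factorization hm0
  -- the ambient group
  have hcardG : Fintype.card (WinG (pc n) (pb n)) = n := by
    rw [Fintype.card_pi]
    have hstep : ∀ p : ↥n.primeFactors,
        Fintype.card (Fin (pb n p) → ZMod (pc n p)) = (p : ℕ) ^ n.factorization (p : ℕ) := by
      intro p
      rw [Fintype.card_fun, ZMod.card, Fintype.card_fin]
    rw [Finset.prod_congr rfl (fun p _ => hstep p),
      Finset.prod_coe_sort n.primeFactors (fun q => q ^ n.factorization q)]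
    exact prod_primeFactors_factorization hn0
  let e : Fin n ≃ WinG (pc n) (pb n) := (Fintype.equivFinOfCardEq hcardG).symm
  let H : Fin δ → AddSubgroup (WinG (pc n) (pb n)) :=
    fun t => windowSub (pc n) (pb n) (mainW n m t.1)
  let rl : List (List (Finset (Fin n))) := List.ofFn (fun t : Fin δ => (cosets e (H t)).toList)
  let L : List (Finset (Fin n)) := rl.flatten
  -- membership cards
  have hLmem : ∀ C ∈ L, C.card = m := by
    intro C hC
    obtain ⟨l, hl, hCl⟩ := List.mem_flatten.mp hC
    obtain ⟨t, rfl⟩ := (List.mem_ofFn).mp hl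
    rw [cosets_card e (H t) (Finset.mem_toList.mp hCl)]
    exact hfcard t.1
  -- length
  have hroundlen : ∀ t : Fin δ, (cosets e (H t)).toList.length = n / m := by
    intro t
    rw [Finset.length_toList]
    have h := cosets_length e (H t)
    rw [hfcard t.1] at h
    have h3 : (cosets e (H t)).card * m / m = n / m := by rw [h]
    rwa [Nat.mul_div_cancel _ (by omega : 0 < m)] at h3
  have hLlen : L.length = δ * n / m := by
    show rl.flatten.length = _
    rw [List.length_flatten]
    have : rl.map List.length = List.ofFn (fun _ : Fin δ => n / m) := by
      show (List.ofFn _).map _ = _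
      rw [List.map_ofFn]
      congr 1
      funext t
      exact hroundlen t
    rw [this, List.sum_ofFn, Finset.sum_const, Finset.card_univ, Fintype.card_fin,
      smul_eq_mul, Nat.mul_div_assoc δ hdvd]
  -- the product
  have hprodL : (L.map avgM).reverse.prod = (n : ℝ)⁻¹ • Matrix.of (fun _ _ => (1 : ℝ)) := by
    show ((rl.flatten.map avgM)).reverse.prod = _
    rw [List.map_flatten, rev_prod_join]
    have hround : ∀ t : Fin δ,
        (((cosets e (H t)).toList.map avgM)).reverse.prod = cosetM e (H t) := by
      intro t
      rw [reverse_prod_avgM _ (cosets_disj e (H t)) (fun C hC =>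
        cosets_card e (H t) (Finset.mem_toList.mp hC)), blockM_cosets]
    have hmapeq : (rl.map (List.map avgM)).map (fun l => l.reverse.prod)
        = List.ofFn (fun t : Fin δ => cosetM e (H t)) := by
      show ((List.ofFn _).map _).map _ = _
      rw [List.map_ofFn, List.map_ofFn]
      congr 1
      funext t
      exact hround t
    rw [hmapeq, ofFn_reverse]
    have hofn : List.ofFn (fun i : Fin δ => cosetM e (H i.rev))
        = (List.ofFn (fun i : Fin δ => mainW n m (i.rev : Fin δ).1)).map
            (fun Wf => cosetM e (windowSub (pc n) (pb n) Wf)) := by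
      rw [List.map_ofFn]
      congr 1
    rw [hofn, fold_windows]
    have hcover : (List.ofFn (fun i : Fin δ => mainW n m (i.rev : Fin δ).1)).foldr
        (fun Wf acc i => Wf i ∪ acc i) (fun _ => ∅) = fun p => (Finset.univ : Finset (Fin (pb n p))) := by
      funext p
      apply Finset.eq_univ_iff_forall.mpr
      intro j
      rw [mem_foldr_union]
      obtain ⟨t, ht⟩ := hWcover p j
      exact ⟨mainW n m (t.rev.rev : Fin δ).1, (List.mem_ofFn).mpr ⟨t.rev, rfl⟩,
        by rwa [Fin.rev_rev]⟩
    rw [hcover, windowSub_univ, cosetM_top]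
  -- final packaging
  refine ⟨fun t => L.get (Fin.cast hLlen.symm t), ?_, ?_⟩
  · intro t
    exact hLmem _ (L.get_mem _)
  · have hlist : (List.ofFn fun t : Fin (δ * n / m) => avgM (L.get (Fin.cast hLlen.symm t)))
        = L.map avgM := by
      apply List.ext_getElem
      · rw [List.length_ofFn, List.length_map, hLlen]
      · intro i h1 h2
        rw [List.getElem_ofFn, List.getElem_map]
        rfl
    rw [hlist, hprodL]

end Main
end
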